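/- (Exhaustiveness of SGRAND.) Suppose n ≥ 1 and let (S, e) be an SGRAND run. Then S g is nonempty for every g < 2^n, the queried vectors e 0, e 1, …, e (2^n − 1) are pairwise distinct, and every error vector in (Fin n → ZMod 2) equals e g for some g < 2^n; that is, the run without abandonment enumerates all of (Fin n → ZMod 2). -/
import Mathlib


/-- The index of the least reliable flipped bit: the largest coordinate `j`
with `e j ≠ 0` (as a natural number; `0` if `e = 0`). -/
def jstar {n : ℕ} (e : Fin n → ZMod 2) : ℕ :=
  (Finset.univ.filter fun j => e j ≠ 0).sup fun j => (j : ℕ)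

/-- The parent `π(e)` of an error vector: zero out coordinate `j*(e)` and,
if `j*(e) > 0`, set coordinate `j*(e) - 1` to `1`; `π(0) = 0`. -/
def parent {n : ℕ} (e : Fin n → ZMod 2) : Fin n → ZMod 2 :=
  if e = 0 then 0
  else fun j =>
    if (j : ℕ) = jstar e then 0
    else if 0 < jstar e ∧ (j : ℕ) = jstar e - 1 then 1
    else e j
/-- `deltaN k` is the vector with a `1` at the coordinate of index `k` and `0` elsewhere. -/
def deltaN {n : ℕ} (k : ℕ) : Fin n → ZMod 2 := fun i => if (i : ℕ) = k then 1 else 0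

/-- The children set `C(e)`. -/
def children {n : ℕ} (e : Fin n → ZMod 2) : Finset (Fin n → ZMod 2) :=
  if e = 0 then {deltaN 0}
  else if jstar e = n - 1 then ∅
  else {e + deltaN (jstar e + 1), e + deltaN (jstar e) + deltaN (jstar e + 1)}
/-- Likelihood of an error vector given per-bit likelihoods `q`. -/
noncomputable def Q {n : ℕ} (q : Fin n → ZMod 2 → NNReal) (e : Fin n → ZMod 2) : NNReal :=
  ∏ j, q j (e j)
/-- An SGRAND run: `S g` is the candidate set before the `(g+1)`-st query and
`E g` is the `(g+1)`-st queried error vector. -/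
def SGRANDRun {n : ℕ} (q : Fin n → ZMod 2 → NNReal)
    (S : ℕ → Finset (Fin n → ZMod 2)) (E : ℕ → Fin n → ZMod 2) : Prop :=
  S 0 = {0} ∧
  ∀ g, (S g).Nonempty →
    E g ∈ S g ∧ (∀ v ∈ S g, Q q v ≤ Q q (E g)) ∧
    S (g + 1) = (S g).erase (E g) ∪ children (E g)
open Finset

namespace SGRANDaux

variable {n : ℕ}

lemma zmod2_eq_one {a : ZMod 2} (h : a ≠ 0) : a = 1 := by revert a; decide

lemma le_jstar {e : Fin n → ZMod 2} {j : Fin n} (h : e j ≠ 0) : (j : ℕ) ≤ jstar e :=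
  Finset.le_sup (by simp [h])

lemma jstar_eq {e : Fin n → ZMod 2} {k : ℕ} (hk : k < n)
    (h1 : e ⟨k, hk⟩ ≠ 0) (h2 : ∀ j : Fin n, k < (j : ℕ) → e j = 0) : jstar e = k := by
  refine le_antisymm (Finset.sup_le ?_) (le_jstar h1)
  intro j hj
  simp only [Finset.mem_filter] at hj
  by_contra h
  exact hj.2 (h2 j (by omega))

lemma jstar_lt (hn : 1 ≤ n) (e : Fin n → ZMod 2) : jstar e < n := by
  unfold jstar
  refine (Finset.sup_lt_iff (show (⊥:ℕ) < n from hn)).mpr ?_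
  intro j _; exact j.isLt

lemma eq_zero_of_jstar_lt {e : Fin n → ZMod 2} {j : Fin n} (h : jstar e < (j:ℕ)) : e j = 0 := by
  by_contra hj
  exact absurd (le_jstar hj) (by omega)

lemma exists_coord {e : Fin n → ZMod 2} (he : e ≠ 0) :
    ∃ j : Fin n, (j : ℕ) = jstar e ∧ e j = 1 := by
  have hne : (Finset.univ.filter fun j => e j ≠ 0).Nonempty := by
    rcases Function.ne_iff.mp he with ⟨j, hj⟩
    exact ⟨j, by simpa using hj⟩
  obtain ⟨j, hjmem, hj⟩ := Finset.exists_mem_eq_sup _ hne fun j => (j : ℕ)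
  simp only [Finset.mem_filter] at hjmem
  exact ⟨j, hj.symm, zmod2_eq_one hjmem.2⟩

lemma parent_apply {e : Fin n → ZMod 2} (he : e ≠ 0) (j : Fin n) :
    parent e j = if (j : ℕ) = jstar e then 0
      else if 0 < jstar e ∧ (j : ℕ) = jstar e - 1 then 1 else e j := by
  simp [parent, he]

end SGRANDaux
open Finset

namespace SGRANDaux2
open SGRANDaux

variable {n : ℕ}

lemma coord_jstar {e : Fin n → ZMod 2} (he : e ≠ 0) {j : Fin n} (hj : (j:ℕ) = jstar e) :
    e j = 1 := by
  obtain ⟨j0, hj0, h1⟩ := exists_coord he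
  have : j = j0 := Fin.ext (by omega)
  rw [this]; exact h1

lemma deltaN0_ne (hn : 1 ≤ n) : (deltaN 0 : Fin n → ZMod 2) ≠ 0 := by
  intro h
  have := congrFun h ⟨0, hn⟩
  simp [deltaN] at this

lemma jstar_deltaN0 (hn : 1 ≤ n) : jstar (deltaN 0 : Fin n → ZMod 2) = 0 := by
  refine jstar_eq hn (by simp [deltaN]) ?_
  intro j hj
  simp [deltaN]; omega

lemma parent_deltaN0 (hn : 1 ≤ n) : parent (deltaN 0 : Fin n → ZMod 2) = 0 := by
  funext j
  rw [parent_apply (deltaN0_ne hn)]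
  simp [jstar_deltaN0 hn, deltaN]

lemma eq_deltaN0_of_jstar_zero {c : Fin n → ZMod 2} (hc : c ≠ 0) (h0 : jstar c = 0) :
    c = deltaN 0 := by
  funext j
  by_cases hj : (j : ℕ) = 0
  · rw [coord_jstar hc (by omega)]; simp [deltaN, hj]
  · rw [eq_zero_of_jstar_lt (show jstar c < (j:ℕ) by omega)]; simp [deltaN, hj]

lemma parent_of_jstar_zero {c : Fin n → ZMod 2} (hc : c ≠ 0) (h0 : jstar c = 0) :
    parent c = 0 := by
  funext j
  rw [parent_apply hc]
  by_cases hj : (j : ℕ) = 0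
  · simp [hj, h0]
  · simp [hj, h0]
    exact eq_zero_of_jstar_lt (show jstar c < (j:ℕ) by omega)

lemma jstar_parent (hn : 1 ≤ n) {c : Fin n → ZMod 2} (hc : c ≠ 0) (hm : 0 < jstar c) :
    jstar (parent c) = jstar c - 1 ∧ parent c ≠ 0 := by
  have hlt : jstar c < n := jstar_lt hn c
  have h1 : parent c ⟨jstar c - 1, by omega⟩ = 1 := by
    rw [parent_apply hc, if_neg (show ¬(jstar c - 1 = jstar c) by omega), if_pos ⟨hm, rfl⟩]
  have h2 : ∀ j : Fin n, jstar c - 1 < (j : ℕ) → parent c j = 0 := by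
    intro j hj
    by_cases hje : (j : ℕ) = jstar c
    · rw [parent_apply hc, if_pos hje]
    · rw [parent_apply hc, if_neg hje, if_neg (by push_neg; intro _; omega)]
      exact eq_zero_of_jstar_lt (by omega)
  have hj : jstar (parent c) = jstar c - 1 :=
    jstar_eq (by omega) (by rw [h1]; exact one_ne_zero) h2
  refine ⟨hj, fun h => ?_⟩
  rw [h] at h1
  simp at h1

end SGRANDaux2
namespace SGRANDaux2
open SGRANDaux

variable {n : ℕ}

lemma ne_zero_of_coord {e : Fin n → ZMod 2} {j : Fin n} (h : e j ≠ 0) : e ≠ 0 :=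
  fun h0 => h (by rw [h0]; rfl)

lemma parent_ep {c : Fin n → ZMod 2} (hc : c ≠ 0) (hm : 0 < jstar c) (j : Fin n) :
    parent c j = if (j:ℕ) = jstar c then 0
      else if (j:ℕ) = jstar c - 1 then 1 else c j := by
  rw [parent_apply hc]
  by_cases h1 : (j:ℕ) = jstar c
  · simp [h1]
  · simp [h1, hm]

lemma mem_children_parent (hn : 1 ≤ n) {c : Fin n → ZMod 2} (hc : c ≠ 0) :
    c ∈ children (parent c) := by
  by_cases hm : jstar c = 0
  · rw [parent_of_jstar_zero hc hm, eq_deltaN0_of_jstar_zero hc hm]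
    simp [children]
  · have hm' : 0 < jstar c := by omega
    obtain ⟨hje, hene⟩ := jstar_parent hn hc hm'
    have hlt : jstar c < n := jstar_lt hn c
    have hne : jstar (parent c) ≠ n - 1 := by omega
    have hsucc : jstar c - 1 + 1 = jstar c := by omega
    rw [children, if_neg hene, if_neg hne, hje, hsucc]
    by_cases hb : c ⟨jstar c - 1, by omega⟩ = 0
    · refine Finset.mem_insert.mpr (Or.inr (Finset.mem_singleton.mpr ?_))
      funext j
      simp only [Pi.add_apply, parent_ep hc hm', deltaN]
      split_ifs
      all_goals try omega
      all_goals try (rw [coord_jstar hc ‹(j:ℕ) = jstar c›]; decide)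
      all_goals try (rw [show j = (⟨jstar c - 1, by omega⟩ : Fin n) from
        Fin.ext ‹(j:ℕ) = jstar c - 1›, hb]; decide)
      all_goals rw [add_zero, add_zero]
    · have hb1 : c ⟨jstar c - 1, by omega⟩ = 1 := zmod2_eq_one hb
      refine Finset.mem_insert.mpr (Or.inl ?_)
      funext j
      simp only [Pi.add_apply, parent_ep hc hm', deltaN]
      split_ifs
      all_goals try omega
      all_goals try (rw [coord_jstar hc ‹(j:ℕ) = jstar c›]; decide)
      all_goals try (rw [show j = (⟨jstar c - 1, by omega⟩ : Fin n) from
        Fin.ext ‹(j:ℕ) = jstar c - 1›, hb1]; decide)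
      all_goals rw [add_zero]

lemma children_spec (hn : 1 ≤ n) {e c : Fin n → ZMod 2} (hc : c ∈ children e) :
    c ≠ 0 ∧ parent c = e := by
  by_cases he : e = 0
  · rw [children, if_pos he, Finset.mem_singleton] at hc
    rw [hc, he]
    exact ⟨deltaN0_ne hn, parent_deltaN0 hn⟩
  · rw [children, if_neg he] at hc
    by_cases hlast : jstar e = n - 1
    · simp [hlast] at hc
    · rw [if_neg hlast] at hc
      have hlt : jstar e < n := jstar_lt hn e
      have hk1 : jstar e + 1 < n := by omega
      have h0 : e ⟨jstar e + 1, hk1⟩ = 0 :=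
        eq_zero_of_jstar_lt (j := ⟨jstar e + 1, hk1⟩) (Nat.lt_succ_self _)
      rcases Finset.mem_insert.mp hc with h | h
      · subst h
        set c : Fin n → ZMod 2 := e + deltaN (jstar e + 1) with hcdef
        have hv1 : c ⟨jstar e + 1, hk1⟩ = 1 := by
          rw [hcdef]
          simp only [Pi.add_apply, deltaN, h0]
          simp
        have hv2 : ∀ j : Fin n, jstar e + 1 < (j:ℕ) → c j = 0 := by
          intro j hj
          have h0' : e j = 0 := eq_zero_of_jstar_lt (by omega)
          rw [hcdef]
          simp only [Pi.add_apply, deltaN, h0']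
          rw [if_neg (by omega)]
          decide
        have hcne : c ≠ 0 :=
          ne_zero_of_coord (j := ⟨jstar e + 1, hk1⟩) (by rw [hv1]; decide)
        have hjc : jstar c = jstar e + 1 :=
          jstar_eq hk1 (by rw [hv1]; decide) hv2
        refine ⟨hcne, ?_⟩
        funext j
        rw [parent_ep hcne (by rw [hjc]; omega), hjc, hcdef]
        simp only [Nat.add_sub_cancel, Pi.add_apply, deltaN]
        split_ifs
        all_goals try omega
        all_goals try exact (eq_zero_of_jstar_lt (by omega)).symm
        all_goals try exact (coord_jstar he ‹(j:ℕ) = jstar e›).symm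
        all_goals rw [add_zero]
      · rw [Finset.mem_singleton] at h
        subst h
        set c : Fin n → ZMod 2 := e + deltaN (jstar e) + deltaN (jstar e + 1) with hcdef
        have hv1 : c ⟨jstar e + 1, hk1⟩ = 1 := by
          rw [hcdef]
          simp only [Pi.add_apply, deltaN, h0]
          rw [if_neg (by omega)]
          simp
        have hv2 : ∀ j : Fin n, jstar e + 1 < (j:ℕ) → c j = 0 := by
          intro j hj
          have h0' : e j = 0 := eq_zero_of_jstar_lt (by omega)
          rw [hcdef]
          simp only [Pi.add_apply, deltaN, h0']
          rw [if_neg (by omega), if_neg (by omega)]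
          decide
        have hcne : c ≠ 0 :=
          ne_zero_of_coord (j := ⟨jstar e + 1, hk1⟩) (by rw [hv1]; decide)
        have hjc : jstar c = jstar e + 1 :=
          jstar_eq hk1 (by rw [hv1]; decide) hv2
        refine ⟨hcne, ?_⟩
        funext j
        rw [parent_ep hcne (by rw [hjc]; omega), hjc, hcdef]
        simp only [Nat.add_sub_cancel, Pi.add_apply, deltaN]
        split_ifs
        all_goals try omega
        all_goals try exact (eq_zero_of_jstar_lt (by omega)).symm
        all_goals try exact (coord_jstar he ‹(j:ℕ) = jstar e›).symm
        all_goals rw [add_zero, add_zero]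

end SGRANDaux2
namespace SGRANDaux3
open SGRANDaux SGRANDaux2 Finset

variable {n : ℕ}

lemma notMem_children_self (hn : 1 ≤ n) (c : Fin n → ZMod 2) : c ∉ children c := by
  intro h
  obtain ⟨hne, hp⟩ := children_spec hn h
  by_cases hm : jstar c = 0
  · exact hne (hp ▸ parent_of_jstar_zero hne hm)
  · have h1 := (jstar_parent hn hne (by omega)).1
    rw [hp] at h1
    omega

lemma all_mem_of_closed (hn : 1 ≤ n) {T : Finset (Fin n → ZMod 2)}
    (h0 : (0 : Fin n → ZMod 2) ∈ T) (hcl : ∀ v ∈ T, children v ⊆ T) :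
    ∀ v, v ∈ T := by
  suffices H : ∀ k, ∀ v : Fin n → ZMod 2, jstar v ≤ k → v ∈ T by
    exact fun v => H (jstar v) v le_rfl
  intro k
  induction k with
  | zero =>
    intro v hv
    by_cases h : v = 0
    · rw [h]; exact h0
    · have hp0 : parent v = 0 := parent_of_jstar_zero h (by omega)
      have hmem := mem_children_parent hn h
      rw [hp0] at hmem
      exact hcl 0 h0 hmem
  | succ k ih =>
    intro v hv
    by_cases h : v = 0
    · rw [h]; exact h0
    · have hmem := mem_children_parent hn h
      by_cases hm : jstar v = 0
      · rw [parent_of_jstar_zero h hm] at hmem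
        exact hcl 0 h0 hmem
      · obtain ⟨hje, hpne⟩ := jstar_parent hn h (by omega)
        exact hcl _ (ih (parent v) (by omega)) hmem

lemma card_univ_vec : Fintype.card (Fin n → ZMod 2) = 2 ^ n := by
  rw [Fintype.card_fun, ZMod.card, Fintype.card_fin]

variable {q : Fin n → ZMod 2 → NNReal}
  {S : ℕ → Finset (Fin n → ZMod 2)} {E : ℕ → Fin n → ZMod 2}

lemma run_inv (hn : 1 ≤ n) (hrun : SGRANDRun q S E) :
    ∀ g, (∀ i, i < g → (S i).Nonempty) →
    Disjoint ((range g).image E) (S g) ∧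
    (∀ v ∈ (range g).image E, children v ⊆ (range g).image E ∪ S g) ∧
    ((0:Fin n → ZMod 2) ∈ (range g).image E ∪ S g) ∧
    (∀ v ∈ (range g).image E ∪ S g, v ≠ 0 → parent v ∈ (range g).image E) ∧
    ((range g).image E).card = g := by
  intro g
  induction g with
  | zero =>
    intro _
    refine ⟨by simp, by simp, ?_, ?_, by simp⟩
    · simp [hrun.1]
    · intro v hv hv0
      simp [hrun.1] at hv
      exact absurd hv hv0
  | succ g ih =>
    intro hne
    obtain ⟨hd, hcl, h0m, hpar, hcard⟩ := ih (fun i hi => hne i (by omega))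
    obtain ⟨hE, -, hS⟩ := hrun.2 g (hne g (by omega))
    have hQ' : (range (g+1)).image E = insert (E g) ((range g).image E) := by
      rw [Finset.range_add_one, Finset.image_insert]
    have hEg : E g ∉ (range g).image E := fun h => Finset.disjoint_left.mp hd h hE
    refine ⟨?_, ?_, ?_, ?_, ?_⟩
    · rw [Finset.disjoint_left]
      intro x hx hxS
      rw [hQ', Finset.mem_insert] at hx
      rw [hS, Finset.mem_union] at hxS
      rcases hxS with hxe | hxc
      · rcases hx with rfl | hx
        · exact (Finset.mem_erase.mp hxe).1 rfl
        · exact Finset.disjoint_left.mp hd hx (Finset.mem_erase.mp hxe).2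
      · obtain ⟨hx0, hxp⟩ := children_spec hn hxc
        rcases hx with rfl | hx
        · exact notMem_children_self hn _ hxc
        · have hpm : parent x ∈ (range g).image E :=
            hpar x (Finset.mem_union_left _ hx) hx0
          rw [hxp] at hpm
          exact Finset.disjoint_left.mp hd hpm hE
    · intro v hv c hc
      rw [hQ', Finset.mem_insert] at hv
      rw [hQ', hS]
      rcases hv with rfl | hv
      · exact Finset.mem_union_right _ (Finset.mem_union_right _ hc)
      · have hm := hcl v hv hc
        rw [Finset.mem_union] at hm
        rcases hm with h | h
        · exact Finset.mem_union_left _ (Finset.mem_insert_of_mem h)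
        · by_cases hce : c = E g
          · exact Finset.mem_union_left _ (by rw [hce]; exact Finset.mem_insert_self _ _)
          · exact Finset.mem_union_right _
              (Finset.mem_union_left _ (Finset.mem_erase.mpr ⟨hce, h⟩))
    · rw [hQ', hS]
      rw [Finset.mem_union] at h0m ⊢
      rcases h0m with h | h
      · exact Or.inl (Finset.mem_insert_of_mem h)
      · by_cases h00 : (0:Fin n → ZMod 2) = E g
        · exact Or.inl (by rw [h00]; exact Finset.mem_insert_self _ _)
        · exact Or.inr (Finset.mem_union_left _ (Finset.mem_erase.mpr ⟨h00, h⟩))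
    · intro v hv hv0
      rw [hQ']
      rw [Finset.mem_union, hQ', hS, Finset.mem_insert, Finset.mem_union] at hv
      have old : v ∈ (range g).image E ∪ S g →
          parent v ∈ insert (E g) ((range g).image E) := fun h =>
        Finset.mem_insert_of_mem (hpar v h hv0)
      rcases hv with (rfl | hv) | (hv | hv)
      · exact old (Finset.mem_union_right _ hE)
      · exact old (Finset.mem_union_left _ hv)
      · exact old (Finset.mem_union_right _ (Finset.mem_erase.mp hv).2)
      · rw [(children_spec hn hv).2]
        exact Finset.mem_insert_self _ _
    · rw [hQ', Finset.card_insert_of_notMem hEg, hcard]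

lemma S_nonempty (hn : 1 ≤ n) (hrun : SGRANDRun q S E) :
    ∀ g, g < 2 ^ n → (S g).Nonempty := by
  intro g
  induction g using Nat.strong_induction_on with
  | _ g ih =>
    intro hg
    have hprev : ∀ i, i < g → (S i).Nonempty := fun i hi => ih i hi (by omega)
    obtain ⟨hd, hcl, h0m, hpar, hcard⟩ := run_inv hn hrun g hprev
    by_contra hemp
    rw [Finset.not_nonempty_iff_eq_empty] at hemp
    rw [hemp, Finset.union_empty] at h0m hcl
    have hall := all_mem_of_closed hn h0m hcl
    have huniv : (range g).image E = Finset.univ := Finset.eq_univ_iff_forall.mpr hall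
    rw [huniv, Finset.card_univ, card_univ_vec] at hcard
    omega

end SGRANDaux3
theorem sgrand_exhaustive {n : ℕ} (hn : 1 ≤ n) (q : Fin n → ZMod 2 → NNReal)
    (S : ℕ → Finset (Fin n → ZMod 2)) (E : ℕ → Fin n → ZMod 2)
    (hrun : SGRANDRun q S E) :
    (∀ g < 2 ^ n, (S g).Nonempty) ∧
    (∀ g < 2 ^ n, ∀ h < 2 ^ n, g ≠ h → E g ≠ E h) ∧
    (∀ v : Fin n → ZMod 2, ∃ g < 2 ^ n, E g = v) := by
  have hne := SGRANDaux3.S_nonempty hn hrun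
  have key : ∀ g h, g < h → h < 2 ^ n → E g ≠ E h := by
    intro g h hgh hh
    obtain ⟨hd, -, -, -, -⟩ :=
      SGRANDaux3.run_inv hn hrun h (fun i hi => hne i (by omega))
    obtain ⟨hEh, -, -⟩ := hrun.2 h (hne h hh)
    intro heq
    have hm : E g ∈ (Finset.range h).image E :=
      Finset.mem_image_of_mem E (Finset.mem_range.mpr hgh)
    rw [heq] at hm
    exact Finset.disjoint_left.mp hd hm hEh
  refine ⟨hne, ?_, ?_⟩
  · intro g hg h hh hgh
    rcases Nat.lt_or_ge g h with hlt | hge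
    · exact key g h hlt hh
    · exact fun heq => key h g (by omega) hg heq.symm
  · obtain ⟨-, -, -, -, hcard⟩ := SGRANDaux3.run_inv hn hrun (2 ^ n) hne
    have huniv : (Finset.range (2 ^ n)).image E = Finset.univ := by
      apply Finset.eq_univ_of_card
      rw [hcard, SGRANDaux3.card_univ_vec]
    intro v
    have hv : v ∈ (Finset.range (2 ^ n)).image E := huniv ▸ Finset.mem_univ v
    obtain ⟨g, hg, hgv⟩ := Finset.mem_image.mp hv
    exact ⟨g, Finset.mem_range.mp hg, hgv⟩
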